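/- Let N₀ ∈ ℕ and C > 0. If a sequence of complex numbers (F_N)_{N∈ℕ} satisfies (i) lim_{N→∞} |F_N|^{1/N} = 0, and (ii) |F_N| ≤ C ∑_{k=N+1}^∞ |F_k| for all N ≥ N₀, then there exists N₁ ∈ ℕ such that F_N = 0 for all N ≥ N₁. -/

import Mathlib

open Complex MeasureTheory Polynomial Set Filter Topology
open scoped ENNReal

noncomputable section

/-- The inner product `⟨g,h⟩_μ = ∫ g · conj h dμ`. -/
def mInner (μ : Measure ℂ) (g h : ℂ → ℂ) : ℂ :=
  ∫ ζ, g ζ * (starRingEnd ℂ) (h ζ) ∂μ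

/-- The support of a Borel measure on ℂ. -/
def measSupport (μ : Measure ℂ) : Set ℂ :=
  {z | ∀ U ∈ 𝓝 z, μ U ≠ 0}

/-- `μ ∈ M(E)`: a finite positive Borel measure with infinite support contained in `E`. -/
def MeasClass (E : Set ℂ) (μ : Measure ℂ) : Prop :=
  IsFiniteMeasure μ ∧ measSupport μ ⊆ E ∧ (measSupport μ).Infinite

/-- `p` is the sequence of orthonormal polynomials of `μ` (degree `n`, positive
leading coefficient, orthonormal). -/
def IsONPolys (μ : Measure ℂ) (p : ℕ → Polynomial ℂ) : Prop :=
  (∀ n, (p n).natDegree = n) ∧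
  (∀ n, ∃ κ : ℝ, 0 < κ ∧ (p n).leadingCoeff = (κ : ℂ)) ∧
  (∀ n₁ n₂, mInner μ (fun z => (p n₁).eval z) (fun z => (p n₂).eval z)
      = if n₁ = n₂ then 1 else 0)

/-- The second type functions `s_n(z) = ∫ conj(p_n(ζ))/(z-ζ) dμ(ζ)`. -/
def sFun (μ : Measure ℂ) (p : ℕ → Polynomial ℂ) (n : ℕ) (z : ℂ) : ℂ :=
  ∫ ζ, (starRingEnd ℂ) ((p n).eval ζ) / (z - ζ) ∂μ

/-- `Φ` is the exterior conformal map of `E` : a holomorphic bijection of `ℂ∖E` onto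
the exterior of the closed unit disk with `Φ(z)/z → c > 0` at infinity. -/
def IsExtConfMap (E : Set ℂ) (Φ : ℂ → ℂ) : Prop :=
  DifferentiableOn ℂ Φ Eᶜ ∧
  Set.BijOn Φ Eᶜ {w : ℂ | 1 < norm w} ∧
  ∃ c : ℝ, 0 < c ∧
    Filter.Tendsto (fun z => Φ z / z) (Bornology.cobounded ℂ) (𝓝 (c : ℂ))

/-- The canonical domain of (extended real) index `r` :
`D_r = E ∪ {z ∉ E : |Φ(z)| < r}`. -/
def Dcan (E : Set ℂ) (Φ : ℂ → ℂ) (r : ℝ≥0∞) : Set ℂ :=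
  E ∪ {z | z ∉ E ∧ ENNReal.ofReal (norm (Φ z)) < r}

/-- The level curve `Γ_ρ = {z : |Φ(z)| = ρ}`. -/
def levCurve (E : Set ℂ) (Φ : ℂ → ℂ) (ρ : ℝ) : Set ℂ :=
  {z | z ∉ E ∧ norm (Φ z) = ρ}

/-- `f ∈ H(E)` : `f` is holomorphic on some open neighborhood of `E`. -/
def HoloNhd (E : Set ℂ) (f : ℂ → ℂ) : Prop :=
  ∃ U, IsOpen U ∧ E ⊆ U ∧ DifferentiableOn ℂ f U

/-- `f` and `g` agree on some open neighborhood of `E`. -/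
def AgreesNear (E : Set ℂ) (f g : ℂ → ℂ) : Prop :=
  ∃ U, IsOpen U ∧ E ⊆ U ∧ Set.EqOn f g U

/-- `f` (holomorphic near `E`) admits a holomorphic extension to the set `D`. -/
def ExtHolo (E : Set ℂ) (f : ℂ → ℂ) (D : Set ℂ) : Prop :=
  ∃ g, DifferentiableOn ℂ g D ∧ AgreesNear E f g

/-- `f` extends to `D_ρ` meromorphically with at most `m` poles counting
multiplicities (i.e. some monic polynomial `q` of degree `≤ m` kills the poles). -/
def MeroExtTo (E : Set ℂ) (Φ : ℂ → ℂ) (f : ℂ → ℂ) (m : ℕ) (ρ : ℝ) : Prop :=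
  ∃ q : Polynomial ℂ, q.Monic ∧ q.natDegree ≤ m ∧
    ExtHolo E (fun z => q.eval z * f z) (Dcan E Φ (ENNReal.ofReal ρ))

/-- `ρ_m(f)` : the index of the largest canonical domain to which `f` extends
meromorphically with at most `m` poles. -/
def rhoM (E : Set ℂ) (Φ : ℂ → ℂ) (f : ℂ → ℂ) (m : ℕ) : ℝ≥0∞ :=
  sSup {r | ∃ ρ : ℝ, 1 < ρ ∧ r = ENNReal.ofReal ρ ∧ MeroExtTo E Φ f m ρ}

/-- `ρ_0(f)`. -/
def rho0 (E : Set ℂ) (Φ : ℂ → ℂ) (f : ℂ → ℂ) : ℝ≥0∞ := rhoM E Φ f 0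

/-- `μ ∈ Reg₁(E)` : `|p_n(z)|^{1/n} → |Φ(z)|` uniformly on compact subsets of `ℂ∖E`. -/
def Reg1 (E : Set ℂ) (Φ : ℂ → ℂ) (μ : Measure ℂ) (p : ℕ → Polynomial ℂ) : Prop :=
  ∀ K : Set ℂ, IsCompact K → K ⊆ Eᶜ →
    TendstoUniformlyOn (fun n z => norm ((p n).eval z) ^ (1 / (n : ℝ)))
      (fun z => norm (Φ z)) Filter.atTop K

/-- `μ ∈ Reg₂(E)` : `|s_n(z)|^{1/n} → |Φ(z)|⁻¹` uniformly on compact subsets of `ℂ∖E`. -/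
def Reg2 (E : Set ℂ) (Φ : ℂ → ℂ) (μ : Measure ℂ) (p : ℕ → Polynomial ℂ) : Prop :=
  ∀ K : Set ℂ, IsCompact K → K ⊆ Eᶜ →
    TendstoUniformlyOn (fun n z => norm (sFun μ p n z) ^ (1 / (n : ℝ)))
      (fun z => (norm (Φ z))⁻¹) Filter.atTop K

/-- `μ ∈ Reg_{1,2}(E)`. -/
def Reg12 (E : Set ℂ) (Φ : ℂ → ℂ) (μ : Measure ℂ) (p : ℕ → Polynomial ℂ) : Prop :=
  Reg1 E Φ μ p ∧ Reg2 E Φ μ p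

/-- `μ ∈ Reg_{1,2}^m(E)` : additionally `κ_{n-m}/κ_n ≥ c > 0` for all large `n`. -/
def Reg12m (E : Set ℂ) (Φ : ℂ → ℂ) (μ : Measure ℂ) (p : ℕ → Polynomial ℂ) (m : ℕ) : Prop :=
  Reg12 E Φ μ p ∧ ∃ c : ℝ, 0 < c ∧ ∃ n₀ : ℕ, ∀ n ≥ n₀,
    c ≤ norm ((p (n - m)).leadingCoeff) / norm ((p n).leadingCoeff)

/-- A denominator of an `(n,m)` orthogonal Hermite–Padé approximant of the system `F`. -/
def IsHPDenom {ι : Type*} [Fintype ι] (μ : Measure ℂ) (p : ℕ → Polynomial ℂ)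
    (F : ι → ℂ → ℂ) (m : ι → ℕ) (n : ℕ) (Q : Polynomial ℂ) : Prop :=
  Q.Monic ∧ Q.natDegree ≤ ∑ i, m i ∧
  ∀ i, ∀ k < m i,
    mInner μ (fun z => Q.eval z * z ^ k * F i z) (fun z => (p n).eval z) = 0

/-- The numerator `P^μ_{n,m,k,i}` associated to a denominator `Q`. -/
def IsHPNum (μ : Measure ℂ) (p : ℕ → Polynomial ℂ) (Q : Polynomial ℂ) (f : ℂ → ℂ)
    (k n : ℕ) (P : Polynomial ℂ) : Prop :=
  P.degree < (n : WithBot ℕ) ∧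
  ∀ j ≤ n, mInner μ (fun z => Q.eval z * z ^ k * f z - P.eval z)
      (fun z => (p j).eval z) = 0

/-- A denominator of an `(n,m,m*)` incomplete orthogonal Padé approximant of `f`. -/
def IsIncDenom (μ : Measure ℂ) (p : ℕ → Polynomial ℂ) (f : ℂ → ℂ)
    (m mstar n : ℕ) (Q : Polynomial ℂ) : Prop :=
  Q.Monic ∧ Q.natDegree ≤ m ∧
  ∀ k < mstar, mInner μ (fun z => Q.eval z * z ^ k * f z) (fun z => (p n).eval z) = 0

/-- The coefficient norm `‖∑ a_k z^k‖ = ∑ |a_k|` of a polynomial. -/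
def coeffNorm (Q : Polynomial ℂ) : ℝ :=
  ∑ k ∈ Finset.range (Q.natDegree + 1), norm (Q.coeff k)

/-- `limsup_n a_n^{1/n}` computed in `ℝ≥0∞`. -/
def limsupRoot (a : ℕ → ℝ) : ℝ≥0∞ :=
  Filter.limsup (fun n => ENNReal.ofReal (a n ^ (1 / (n : ℝ)))) Filter.atTop

/-- The sup norm of `f` on `K`. -/
def supNorm (f : ℂ → ℂ) (K : Set ℂ) : ℝ :=
  sSup ((fun z => norm (f z)) '' K)

-- `‖Φ‖_K`, replaced by `1` when `K ⊆ E`.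
open scoped Classical in
def phiNormK (E : Set ℂ) (Φ : ℂ → ℂ) (K : Set ℂ) : ℝ :=
  if K ⊆ E then 1 else supNorm Φ K

/-- `g` has a pole of exact order `t` at `ξ`. -/
def IsPoleOrd (g : ℂ → ℂ) (ξ : ℂ) (t : ℕ) : Prop :=
  ∃ h : ℂ → ℂ, (∃ V, IsOpen V ∧ ξ ∈ V ∧ DifferentiableOn ℂ h V) ∧ h ξ ≠ 0 ∧
    ∀ᶠ z in 𝓝[≠] ξ, g z = h z / (z - ξ) ^ t

/-- `g` is holomorphic on a neighborhood of the closure of `D_{|Φ(ξ)|}` except for a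
pole at `ξ` of exact order `t`. -/
def HoloExceptPole (E : Set ℂ) (Φ : ℂ → ℂ) (g : ℂ → ℂ) (ξ : ℂ) (t : ℕ) : Prop :=
  ∃ U, IsOpen U ∧ closure (Dcan E Φ (ENNReal.ofReal (norm (Φ ξ)))) ⊆ U ∧
    DifferentiableOn ℂ g (U \ {ξ}) ∧ IsPoleOrd g ξ t

/-- `g` extends a polynomial combination `∑ vᵢ Fᵢ`, `deg vᵢ < mᵢ`, of the system `F`. -/
def IsCombExt {ι : Type*} [Fintype ι] (E : Set ℂ) (F : ι → ℂ → ℂ) (m : ι → ℕ)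
    (g : ℂ → ℂ) : Prop :=
  ∃ v : ι → Polynomial ℂ, (∀ i, (v i).degree < (m i : WithBot ℕ)) ∧
    AgreesNear E (fun z => ∑ i, (v i).eval z * F i z) g

/-- For each `t = 1,…,τ` there is a polynomial combination with a pole of exact order
`t` at `ξ`, holomorphic elsewhere on a neighborhood of `closure D_{|Φ(ξ)|}`. -/
def SysAll {ι : Type*} [Fintype ι] (E : Set ℂ) (Φ : ℂ → ℂ) (F : ι → ℂ → ℂ)
    (m : ι → ℕ) (ξ : ℂ) (τ : ℕ) : Prop :=
  ∀ t, 1 ≤ t → t ≤ τ → ∃ g, IsCombExt E F m g ∧ HoloExceptPole E Φ g ξ t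

/-- `ξ` is a system pole of order `τ` of `F` with respect to `m`. -/
def IsSystemPoleOrd {ι : Type*} [Fintype ι] (E : Set ℂ) (Φ : ℂ → ℂ) (F : ι → ℂ → ℂ)
    (m : ι → ℕ) (ξ : ℂ) (τ : ℕ) : Prop :=
  0 < τ ∧ SysAll E Φ F m ξ τ ∧ ¬ SysAll E Φ F m ξ (τ + 1)

/-- `S` is the set of system poles of `F` w.r.t. `m` and `ord` gives their orders. -/
def SystemPoleData {ι : Type*} [Fintype ι] (E : Set ℂ) (Φ : ℂ → ℂ) (F : ι → ℂ → ℂ)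
    (m : ι → ℕ) (S : Finset ℂ) (ord : ℂ → ℕ) : Prop :=
  (∀ ξ, ξ ∈ S ↔ ∃ τ, IsSystemPoleOrd E Φ F m ξ τ) ∧
  ∀ ξ ∈ S, IsSystemPoleOrd E Φ F m ξ (ord ξ)

/-- `F` has exactly `k` system poles with respect to `m`, counting multiplicities. -/
def HasExactlySysPoles {ι : Type*} [Fintype ι] (E : Set ℂ) (Φ : ℂ → ℂ) (F : ι → ℂ → ℂ)
    (m : ι → ℕ) (k : ℕ) : Prop :=
  ∃ S ord, SystemPoleData E Φ F m S ord ∧ ∑ ξ ∈ S, ord ξ = k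

/-- `ρ_{ξ,t}(F,m)` : the largest of the numbers `ρ_t(g)` over polynomial combinations
`g` with a pole of exact order `t` at `ξ`. -/
def rhoXiT {ι : Type*} [Fintype ι] (E : Set ℂ) (Φ : ℂ → ℂ) (F : ι → ℂ → ℂ)
    (m : ι → ℕ) (ξ : ℂ) (t : ℕ) : ℝ≥0∞ :=
  sSup {r | ∃ g, IsCombExt E F m g ∧ HoloExceptPole E Φ g ξ t ∧ r = rhoM E Φ g t}

/-- `𝛒_{ξ,t}(F,m) = min_{k=1,…,t} ρ_{ξ,k}(F,m)`. -/
def rhoBold {ι : Type*} [Fintype ι] (E : Set ℂ) (Φ : ℂ → ℂ) (F : ι → ℂ → ℂ)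
    (m : ι → ℕ) (ξ : ℂ) (t : ℕ) : ℝ≥0∞ :=
  ⨅ k ∈ Finset.Icc 1 t, rhoXiT E Φ F m ξ k

/-- Meromorphic data for `f` on `D_r` : poles `P` with orders `po`, holomorphic `H`
with `(∏_{ξ∈P}(z-ξ)^{po ξ}) f = H` and `H ξ ≠ 0` at each pole (exact orders). -/
def MeroDataOn (E : Set ℂ) (Φ : ℂ → ℂ) (f : ℂ → ℂ) (r : ℝ≥0∞)
    (P : Finset ℂ) (po : ℂ → ℕ) (H : ℂ → ℂ) : Prop :=
  ↑P ⊆ Dcan E Φ r \ E ∧ (∀ ξ ∈ P, 0 < po ξ) ∧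
  DifferentiableOn ℂ H (Dcan E Φ r) ∧ (∀ ξ ∈ P, H ξ ≠ 0) ∧
  AgreesNear E (fun z => (∏ ξ ∈ P, (z - ξ) ^ po ξ) * f z) H

/-- `ξ` is a pole of exact order `t` of the meromorphic continuation of `f`. -/
def IsPoleOfExt (E : Set ℂ) (Φ : ℂ → ℂ) (f : ℂ → ℂ) (ξ : ℂ) (t : ℕ) : Prop :=
  ∃ ρ : ℝ, 1 < ρ ∧ ∃ P po H, MeroDataOn E Φ f (ENNReal.ofReal ρ) P po H ∧ ξ ∈ P ∧ po ξ = t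

/-- The canonical domain of index `ρ` is one where all poles of `z^k Fᵢ` are system
poles whose order as poles does not exceed their order as system poles, and `z^k Fᵢ`
has no other singularities. -/
def GoodIdx {ι : Type*} [Fintype ι] (E : Set ℂ) (Φ : ℂ → ℂ) (F : ι → ℂ → ℂ)
    (m : ι → ℕ) (i : ι) (k : ℕ) (ρ : ℝ) : Prop :=
  ∃ P po H, MeroDataOn E Φ (fun z => z ^ k * F i z) (ENNReal.ofReal ρ) P po H ∧
    ∀ ξ ∈ P, ∃ τ, IsSystemPoleOrd E Φ F m ξ τ ∧ po ξ ≤ τ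

/-- `ρ_{i,k}(F,m)`. -/
def rhoIK {ι : Type*} [Fintype ι] (E : Set ℂ) (Φ : ℂ → ℂ) (F : ι → ℂ → ℂ)
    (m : ι → ℕ) (i : ι) (k : ℕ) : ℝ≥0∞ :=
  sSup {r | ∃ ρ : ℝ, 1 < ρ ∧ r = ENNReal.ofReal ρ ∧ GoodIdx E Φ F m i k ρ}

/-- The meromorphic extension of `f` to `D_{ρ_k(f)}` has exactly `k` poles counting
multiplicities (the minimal degree of a monic denominator is `k`). -/
def ExactPoles (E : Set ℂ) (Φ : ℂ → ℂ) (f : ℂ → ℂ) (k : ℕ) : Prop :=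
  (∃ q : Polynomial ℂ, q.Monic ∧ q.natDegree = k ∧
    ExtHolo E (fun z => q.eval z * f z) (Dcan E Φ (rhoM E Φ f k))) ∧
  ∀ q : Polynomial ℂ, q.Monic →
    ExtHolo E (fun z => q.eval z * f z) (Dcan E Φ (rhoM E Φ f k)) → k ≤ q.natDegree

/-- `F` is polynomially independent with respect to `m`. -/
def PolyIndep {ι : Type*} [Fintype ι] (E : Set ℂ) (F : ι → ℂ → ℂ) (m : ι → ℕ) : Prop :=
  ¬ ∃ v : ι → Polynomial ℂ, (∀ i, (v i).degree < (m i : WithBot ℕ)) ∧ (∃ i, v i ≠ 0) ∧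
    ∃ q : Polynomial ℂ, AgreesNear E (fun z => ∑ i, (v i).eval z * F i z)
      (fun z => q.eval z)

/-- `ξ` is a pole of the vector `G` of order `τ` (the largest order among components). -/
def VecPoleOrd {ι : Type*} [Fintype ι] (E : Set ℂ) (Φ : ℂ → ℂ) (G : ι → ℂ → ℂ)
    (ξ : ℂ) (τ : ℕ) : Prop :=
  (∃ i, IsPoleOfExt E Φ (G i) ξ τ) ∧ ∀ i t, IsPoleOfExt E Φ (G i) ξ t → t ≤ τ

/-- The vector `G` extends meromorphically to `D_ρ` with at most `k` poles counting
multiplicities (common monic denominator of degree `≤ k`). -/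
def VecMeroExtTo {ι : Type*} [Fintype ι] (E : Set ℂ) (Φ : ℂ → ℂ) (G : ι → ℂ → ℂ)
    (k : ℕ) (ρ : ℝ) : Prop :=
  ∃ q : Polynomial ℂ, q.Monic ∧ q.natDegree ≤ k ∧
    ∀ i, ExtHolo E (fun z => q.eval z * G i z) (Dcan E Φ (ENNReal.ofReal ρ))

/-- `ρ_k(G)` for a vector `G`. -/
def vecRhoM {ι : Type*} [Fintype ι] (E : Set ℂ) (Φ : ℂ → ℂ) (G : ι → ℂ → ℂ)
    (k : ℕ) : ℝ≥0∞ :=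
  sSup {r | ∃ ρ : ℝ, 1 < ρ ∧ r = ENNReal.ofReal ρ ∧ VecMeroExtTo E Φ G k ρ}


/-- Lemma 3 of [bosuwan1]. -/
theorem stmt_6 (N₀ : ℕ) (C : ℝ) (hC : 0 < C) (F : ℕ → ℂ)
    (h1 : Filter.Tendsto (fun N => norm (F N) ^ (1 / (N : ℝ)))
      Filter.atTop (𝓝 0))
    (h2 : ∀ N ≥ N₀, norm (F N) ≤ C * ∑' k : ℕ, norm (F (N + 1 + k))) :
    ∃ N₁ : ℕ, ∀ N ≥ N₁, F N = 0 := by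
  set a : ℕ → ℝ := fun n => norm (F n) with ha_def
  have ha : ∀ n, 0 ≤ a n := fun n => norm_nonneg _
  set ε : ℝ := min (1/2) (1/(2*(1+C))) with hε_def
  have hC1 : (0:ℝ) < 1 + C := by linarith
  have hε0 : 0 < ε := lt_min (by norm_num) (by positivity)
  have hεhalf : ε ≤ 1/2 := min_le_left _ _
  have hε1 : ε < 1 := lt_of_le_of_lt hεhalf (by norm_num)
  have hεC : (1+C) * ε ≤ 1/2 := by
    have : ε ≤ 1/(2*(1+C)) := min_le_right _ _
    have h2 : ε * (2*(1+C)) ≤ 1 := (le_div_iff₀ (by positivity)).mp this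
    nlinarith
  -- eventual bound a n ≤ ε ^ n
  have hev : ∀ᶠ n in atTop, a n ^ (1/(n:ℝ)) < ε :=
    h1.eventually_lt_const hε0
  obtain ⟨n₀, hn₀⟩ := eventually_atTop.mp hev
  set n₁ : ℕ := max n₀ 1 with hn₁_def
  have hbound : ∀ n ≥ n₁, a n ≤ ε ^ n := by
    intro n hn
    have hn1 : 1 ≤ n := le_trans (le_max_right _ _) hn
    have hnz : (n:ℝ) ≠ 0 := Nat.cast_ne_zero.mpr (by omega)
    have hle : a n ^ (1/(n:ℝ)) ≤ ε := (hn₀ n (le_trans (le_max_left _ _) hn)).le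
    calc a n = (a n ^ ((1:ℝ)/n)) ^ (n:ℕ) := by
          rw [← Real.rpow_natCast (a n ^ ((1:ℝ)/n)) n, ← Real.rpow_mul (ha n),
            one_div, inv_mul_cancel₀ hnz, Real.rpow_one]
      _ ≤ ε ^ n := pow_le_pow_left₀ (Real.rpow_nonneg (ha n) _) hle n
  -- summability
  have hgeo : Summable (fun n : ℕ => ε ^ n) := summable_geometric_of_lt_one hε0.le hε1
  have hsum : Summable a := by
    rw [← summable_nat_add_iff n₁]
    exact Summable.of_nonneg_of_le (fun n => ha _)
      (fun n => hbound (n + n₁) (by omega))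
      (by simpa using (summable_nat_add_iff n₁).mpr hgeo)
  set σ : ℕ → ℝ := fun N => ∑' k, a (N+1+k) with hσ_def
  have hst : ∀ N : ℕ, Summable (fun k => a (N+1+k)) := by
    intro N
    have := (summable_nat_add_iff (N+1)).mpr hsum
    simpa [add_comm] using this
  have hσ_nonneg : ∀ N, 0 ≤ σ N := fun N => tsum_nonneg (fun k => ha _)
  -- recurrence
  have hrec : ∀ N ≥ N₀, σ N ≤ (1+C) * σ (N+1) := by
    intro N hN
    have hsplit : σ N = a (N+1) + σ (N+1) := by
      have := Summable.tsum_eq_zero_add (hst N)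
      simpa [hσ_def, add_comm, add_left_comm, add_assoc] using this
    have h2' : a (N+1) ≤ C * σ (N+1) := h2 (N+1) (by omega)
    have := hσ_nonneg (N+1)
    rw [hsplit]; nlinarith
  have hiter : ∀ j : ℕ, σ N₀ ≤ (1+C)^j * σ (N₀ + j) := by
    intro j
    induction j with
    | zero => simp
    | succ j ih =>
      have h1 := hrec (N₀ + j) (by omega)
      have hp : (0:ℝ) ≤ (1+C)^j := by positivity
      calc σ N₀ ≤ (1+C)^j * σ (N₀ + j) := ih
        _ ≤ (1+C)^j * ((1+C) * σ (N₀+j+1)) := by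
            exact mul_le_mul_of_nonneg_left h1 hp
        _ = (1+C)^(j+1) * σ (N₀ + (j+1)) := by ring_nf
  -- tail bound
  have htail : ∀ N ≥ n₁, σ N ≤ 2 * ε ^ (N+1) := by
    intro N hN
    have hb : σ N ≤ ∑' k, ε ^ (N+1+k) := by
      apply Summable.tsum_le_tsum _ (hst N)
      · exact (summable_nat_add_iff (N+1)).mpr hgeo |>.congr (fun k => by rw [add_comm])
      · intro k; exact hbound (N+1+k) (by omega)
    have hg : ∑' k : ℕ, ε ^ (N+1+k) = ε^(N+1) * (1-ε)⁻¹ := by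
      simp_rw [pow_add]
      rw [tsum_mul_left, tsum_geometric_of_lt_one hε0.le hε1]
    have hinv : (1-ε)⁻¹ ≤ 2 := by
      rw [inv_le_comm₀ (by linarith) (by norm_num)]; linarith
    have hpow : (0:ℝ) ≤ ε^(N+1) := by positivity
    calc σ N ≤ ε^(N+1) * (1-ε)⁻¹ := by rw [← hg]; exact hb
      _ ≤ ε^(N+1) * 2 := mul_le_mul_of_nonneg_left hinv hpow
      _ = 2 * ε^(N+1) := by ring
  -- σ N₀ ≤ 2 ε^{N₀+1} (1/2)^j eventually
  have hfinal : ∀ j ≥ n₁, σ N₀ ≤ 2 * ε^(N₀+1) * (1/2)^j := by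
    intro j hj
    have h1 := hiter j
    have h2' := htail (N₀ + j) (by omega)
    have hkey : (1+C)^j * (2 * ε^(N₀+j+1)) ≤ 2 * ε^(N₀+1) * (1/2)^j := by
      have : ((1+C)*ε)^j ≤ (1/2:ℝ)^j := pow_le_pow_left₀ (by positivity) hεC j
      have hre : (1+C)^j * (2 * ε^(N₀+j+1)) = 2 * ε^(N₀+1) * ((1+C)*ε)^j := by
        rw [mul_pow, pow_add]; ring
      rw [hre]
      have h0 : (0:ℝ) ≤ 2 * ε^(N₀+1) := by positivity
      exact mul_le_mul_of_nonneg_left this h0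
    calc σ N₀ ≤ (1+C)^j * σ (N₀+j) := h1
      _ ≤ (1+C)^j * (2 * ε^(N₀+j+1)) := by
          exact mul_le_mul_of_nonneg_left h2' (by positivity)
      _ ≤ 2 * ε^(N₀+1) * (1/2)^j := hkey
  have hzero : σ N₀ ≤ 0 := by
    have ht : Tendsto (fun j : ℕ => 2 * ε^(N₀+1) * (1/2:ℝ)^j) atTop (𝓝 0) := by
      have := tendsto_pow_atTop_nhds_zero_of_lt_one (by norm_num : (0:ℝ) ≤ 1/2) (by norm_num : (1/2:ℝ) < 1)
      simpa using this.const_mul (2 * ε^(N₀+1))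
    exact ge_of_tendsto ht (eventually_atTop.mpr ⟨n₁, hfinal⟩)
  have hσ0 : σ N₀ = 0 := le_antisymm hzero (hσ_nonneg N₀)
  refine ⟨N₀ + 1, fun N hN => ?_⟩
  have : a N = 0 := by
    have hterm : a (N₀ + 1 + (N - (N₀+1))) ≤ σ N₀ :=
      Summable.le_tsum (hst N₀) _ (fun j _ => ha _)
    have heq : N₀ + 1 + (N - (N₀+1)) = N := by omega
    rw [heq] at hterm
    exact le_antisymm (hσ0 ▸ hterm) (ha N)
  exact norm_eq_zero.mp this


end
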